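/- Let u = (u_1,…,u_q) be a q-tuple of monomials in S = K[x_1,…,x_n] with deg(u_i) = d+1 for 1 ≤ i ≤ r and deg(u_i) = d for r+1 ≤ i ≤ q (where 0 ≤ r < q). For each i write u_i = x_{s_{i,1}} x_{s_{i,2}} ⋯ x_{s_{i,d_i}} with s_{i,1} ≤ ⋯ ≤ s_{i,d_i}, set k_{i+(j−1)q} = s_{i,j} for all valid i, j, and define g(u) = Σ_{1 ≤ i < j ≤ qd+r} (k_j − k_i). Suppose i < j are indices such that (u_i,u_j) is an unsorted pair, and let u' be the q-tuple obtained from u by replacing (u_i,u_j) by sort(u_i,u_j) (note that sorting preserves the degrees, so u' again has first r entries of degree d+1 and remaining entries of degree d). Then g(u) < g(u'). -/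

import Mathlib

/-!
Monomials in `S = K[x_1, …, x_n]` are identified with multisets of (here, natural-number)
indices. -/

/-- Split a list into the sublist of entries in odd positions (1st, 3rd, 5th, …)
and the sublist of entries in even positions (2nd, 4th, …). -/
def altSplit {α : Type*} : List α → List α × List α
  | [] => ([], [])
  | a :: l => (a :: (altSplit l).2, (altSplit l).1)

/-- The sorting `sort(u,v)` of a pair of monomials: write the product `u*v` as
`x_{i_1} x_{i_2} ⋯ x_{i_t}` with `i_1 ≤ i_2 ≤ ⋯ ≤ i_t`; then `u'` is the product of the
variables in odd positions and `v'` the product of those in even positions. -/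
def sortPair {α : Type*} [LinearOrder α] (u v : Multiset α) : Multiset α × Multiset α :=
  (((altSplit ((u + v).sort (· ≤ ·))).1 : List α), ((altSplit ((u + v).sort (· ≤ ·))).2 : List α))

/-- A pair of monomials is sorted if `sort(u,v) = (u,v)`. -/
def IsSortedPair {α : Type*} [LinearOrder α] (u v : Multiset α) : Prop :=
  sortPair u v = (u, v)

/-- A `q`-tuple of monomials is sorted if `(u_i, u_j)` is a sorted pair for all `i < j`. -/
def IsSortedTuple {α : Type*} [LinearOrder α] {q : ℕ} (u : Fin q → Multiset α) : Prop :=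
  ∀ i j : Fin q, i < j → IsSortedPair (u i) (u j)

/-- A `q`-tuple of monomials is sorted of type `(d,r)` if it is sorted, its first `r` entries
have degree `d+1` and the remaining entries have degree `d`. -/
def IsSortedOfType {α : Type*} [LinearOrder α] {q : ℕ} (u : Fin q → Multiset α)
    (d r : ℕ) : Prop :=
  IsSortedTuple u ∧ ∀ i : Fin q, Multiset.card (u i) = if (i : ℕ) < r then d + 1 else d
/-- The entry `k_{i+(j−1)q} = s_{i,j}` (0-indexed: `k_p = s_{p % q, p / q}`, the `p/q`-th
smallest variable index of the monomial `u_{p % q}`). -/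
def entry {q : ℕ} (u : Fin q → Multiset ℕ) (p : ℕ) : ℕ :=
  if h : 0 < q then ((u ⟨p % q, Nat.mod_lt p h⟩).sort (· ≤ ·)).getD (p / q) 0 else 0

/-- The function `g(u) = Σ_{1 ≤ i < j ≤ qd+r} (k_j − k_i)`. -/
def gval (q d r : ℕ) (u : Fin q → Multiset ℕ) : ℤ :=
  ∑ p ∈ Finset.range (q * d + r), ∑ p' ∈ Finset.range (q * d + r),
    if p < p' then ((entry u p' : ℤ) - (entry u p : ℤ)) else 0


/-! ### Auxiliary lemmas for the proof -/

/-- Interleave two lists: `itl [a₁,a₂,…] [b₁,b₂,…] = [a₁,b₁,a₂,b₂,…]`. -/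
def itl {α : Type*} : List α → List α → List α
  | [], B => B
  | a :: A, B => a :: itl B A
termination_by A B => A.length + B.length
decreasing_by simp; omega

lemma itl_length {α : Type*} : ∀ (A B : List α), (itl A B).length = A.length + B.length
  | [], B => by simp [itl]
  | a :: A, B => by simp [itl, itl_length B A]; omega
termination_by A B => A.length + B.length
decreasing_by simp; omega

lemma itl_perm {α : Type*} : ∀ (A B : List α), List.Perm (itl A B) (A ++ B)
  | [], B => by simp [itl]
  | a :: A, B => by
      simpa [itl] using ((itl_perm B A).trans (List.perm_append_comm)).cons a
termination_by A B => A.length + B.length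
decreasing_by simp; omega

lemma itl_getD : ∀ (A B : List ℕ), B.length ≤ A.length → A.length ≤ B.length + 1 → ∀ m : ℕ,
    (itl A B).getD m 0 = if m % 2 = 0 then A.getD (m/2) 0 else B.getD (m/2) 0
  | [], B, h1, h2, m => by
      have hB : B = [] := List.length_eq_zero_iff.mp (by simpa using h1)
      subst hB; simp [itl]
  | a :: A, B, h1, h2, m => by
      match m with
      | 0 => simp [itl]
      | (m+1) =>
        have hrec := itl_getD B A (by simp at h2 ⊢; omega) (by simp at h1 ⊢; omega) m
        simp only [itl, List.getD_cons_succ, hrec]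
        rcases Nat.even_or_odd m with ⟨mk, hk⟩ | ⟨mk, hk⟩
        · have e1 : m % 2 = 0 := by omega
          have e2 : (m + 1) % 2 = 1 := by omega
          have e3 : (m+1)/2 = m/2 := by omega
          simp [e1, e2, e3]
        · have e1 : m % 2 = 1 := by omega
          have e2 : (m + 1) % 2 = 0 := by omega
          have e3 : (m+1)/2 = m/2 + 1 := by omega
          simp [e1, e2, e3]
termination_by A B => A.length + B.length
decreasing_by simp; omega

lemma itl_altSplit : ∀ (A B : List ℕ), B.length ≤ A.length → A.length ≤ B.length + 1 →
    altSplit (itl A B) = (A, B)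
  | [], B, h1, h2 => by
      have hB : B = [] := List.length_eq_zero_iff.mp (by simpa using h1)
      subst hB; simp [itl, altSplit]
  | a :: A, B, h1, h2 => by
      have hrec := itl_altSplit B A (by simp at h2 ⊢; omega) (by simp at h1 ⊢; omega)
      simp [itl, altSplit, hrec]
termination_by A B => A.length + B.length
decreasing_by simp; omega

lemma altSplit_lengths {α : Type*} : ∀ (l : List α),
    (altSplit l).1.length = (l.length + 1) / 2 ∧ (altSplit l).2.length = l.length / 2
  | [] => by simp [altSplit]
  | a :: l => by
      have h := altSplit_lengths l
      simp [altSplit, h.1, h.2]; omega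

lemma altSplit_itl {α : Type*} : ∀ (l : List α), itl (altSplit l).1 (altSplit l).2 = l
  | [] => by simp [altSplit, itl]
  | a :: l => by simp [altSplit, itl, altSplit_itl l]

lemma altSplit_mem {α : Type*} : ∀ (l : List α),
    (∀ x ∈ (altSplit l).1, x ∈ l) ∧ (∀ x ∈ (altSplit l).2, x ∈ l)
  | [] => by simp [altSplit]
  | a :: l => by
      have h := altSplit_mem l
      constructor
      · intro x hx
        rcases (by simpa [altSplit] using hx : x = a ∨ x ∈ (altSplit l).2) with h' | h'
        · simp [h']
        · simp [h.2 x h']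
      · intro x hx
        simp only [altSplit] at hx
        simp [h.1 x hx]

lemma altSplit_sorted : ∀ (l : List ℕ), l.Pairwise (· ≤ ·) →
    (altSplit l).1.Pairwise (· ≤ ·) ∧ (altSplit l).2.Pairwise (· ≤ ·)
  | [], _ => by simp [altSplit]
  | a :: l, h => by
      rw [List.pairwise_cons] at h
      have hr := altSplit_sorted l h.2
      refine ⟨?_, hr.1⟩
      rw [altSplit, List.pairwise_cons]
      exact ⟨fun b hb => h.1 b ((altSplit_mem l).2 b hb), hr.2⟩

lemma sort_coe (S : List ℕ) (hS : S.Pairwise (· ≤ ·)) :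
    Multiset.sort (S : Multiset ℕ) (· ≤ ·) = S :=
  List.Perm.eq_of_pairwise' (Multiset.pairwise_sort _ _) hS
    (Multiset.coe_eq_coe.mp (Multiset.sort_eq _ _))

lemma ofFn_getD (l : List ℕ) (t : ℕ) (h : l.length = t) :
    List.ofFn (fun m : Fin t => ((l.getD m 0 : ℕ) : ℤ)) = l.map (fun x : ℕ => (x : ℤ)) := by
  subst h
  apply List.ext_getElem (by simp)
  intro n h1 h2
  simp only [List.getElem_ofFn, List.getElem_map]
  rw [List.getD_eq_getElem _ _ (show n < l.length by simpa using h2)]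

lemma sum_pairs (N : ℕ) (k : ℕ → ℤ) :
    ∑ p ∈ Finset.range N, ∑ p' ∈ Finset.range N, (if p < p' then k p' - k p else 0)
    = ∑ p ∈ Finset.range N, ((2*p+1 : ℤ) - N) * k p := by
  induction N with
  | zero => simp
  | succ n ih =>
    rw [Finset.sum_range_succ]
    have h1 : ∀ p ∈ Finset.range n, ∑ p' ∈ Finset.range (n+1), (if p < p' then k p' - k p else 0)
        = (∑ p' ∈ Finset.range n, (if p < p' then k p' - k p else 0)) + (k n - k p) := by
      intro p hp
      rw [Finset.sum_range_succ, if_pos (Finset.mem_range.mp hp)]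
    rw [Finset.sum_congr rfl h1, Finset.sum_add_distrib, ih]
    have h2 : ∑ p' ∈ Finset.range (n+1), (if n < p' then k p' - k n else 0) = 0 := by
      apply Finset.sum_eq_zero
      intro p' hp'
      rw [if_neg (by simp at hp'; omega)]
    rw [h2, add_zero, Finset.sum_range_succ]
    have h3 : ∀ p : ℕ, (2*(p:ℤ)+1-(n:ℤ))*k p + (k n - k p) = (2*(p:ℤ)+1-((n:ℤ)+1))*k p + k n := by
      intro p; ring
    rw [← Finset.sum_add_distrib, Finset.sum_congr rfl (fun p _ => h3 p), Finset.sum_add_distrib,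
      Finset.sum_const, Finset.card_range]
    push_cast
    ring

lemma core {t : ℕ} (c v w : Fin t → ℤ)
    (hc : StrictMono c) (hw : Monotone w)
    (hperm : List.Perm (List.ofFn v) (List.ofFn w))
    (hne : v ≠ w) :
    ∑ m, c m * v m < ∑ m, c m * w m := by
  set σ := Tuple.sort v with hσ
  have hmono : Monotone (v ∘ σ) := Tuple.monotone_sort v
  have hvw : v ∘ σ = w := by
    apply List.ofFn_injective
    exact List.Perm.eq_of_pairwise' hmono.sortedLE_ofFn.pairwise hw.sortedLE_ofFn.pairwise
      ((σ.ofFn_comp_perm v).trans hperm)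
  have hv : v = w ∘ σ.symm := by
    funext m
    have := congrFun hvw (σ.symm m)
    simpa using this
  have hmv : Monovary c w := by
    intro a b hab
    rcases le_or_gt a b with h | h
    · exact hc.monotone h
    · exact absurd hab (not_lt.mpr (hw h.le))
  have key := hmv.sum_smul_comp_perm_lt_sum_smul_iff (σ := σ.symm)
  simp only [smul_eq_mul] at key
  have hgv : (w ∘ σ.symm) = v := hv.symm
  rw [show (fun i => c i * w (σ.symm i)) = fun i => c i * v i by
    funext i; rw [← hgv]; rfl] at key
  apply key.mpr
  rw [hgv]
  intro hM
  apply hne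
  have hvm : Monotone v := by
    intro a b hab
    rcases eq_or_lt_of_le hab with h | h
    · exact le_of_eq (congrArg v h)
    · by_contra hlt
      exact absurd (hM (not_le.mp hlt)) (not_le.mpr (hc h))
  apply List.ofFn_injective
  exact List.Perm.eq_of_pairwise' hvm.sortedLE_ofFn.pairwise hw.sortedLE_ofFn.pairwise hperm

/-- for a `q`-tuple `u` whose first `r` entries have degree `d+1` and whose
remaining entries have degree `d`, if `i < j`, `(u_i, u_j)` is an unsorted pair and `u'` is
obtained from `u` by replacing `(u_i, u_j)` with `sort(u_i, u_j)`, then `g(u) < g(u')`. -/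
theorem gval_lt_of_single_sorting (q d r : ℕ) (hr : r < q) (u : Fin q → Multiset ℕ)
    (hdeg : ∀ i : Fin q, Multiset.card (u i) = if (i : ℕ) < r then d + 1 else d)
    (i j : Fin q) (hij : i < j) (huns : ¬ IsSortedPair (u i) (u j))
    (u' : Fin q → Multiset ℕ)
    (hui : u' i = (sortPair (u i) (u j)).1)
    (huj : u' j = (sortPair (u i) (u j)).2)
    (hother : ∀ k : Fin q, k ≠ i → k ≠ j → u' k = u k) :
    gval q d r u < gval q d r u' := by
  have hq : 0 < q := Nat.lt_of_le_of_lt (Nat.zero_le r) hr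
  set N : ℕ := q * d + r with hN
  set di := Multiset.card (u i) with hdi'
  set dj := Multiset.card (u j) with hdj'
  have hdi : di = if (i:ℕ) < r then d + 1 else d := hdeg i
  have hdj : dj = if (j:ℕ) < r then d + 1 else d := hdeg j
  have hvij : (i:ℕ) < (j:ℕ) := hij
  have hdji1 : dj ≤ di := by rw [hdi, hdj]; split_ifs <;> omega
  have hdji2 : di ≤ dj + 1 := by rw [hdi, hdj]; split_ifs <;> omega
  set t := di + dj with ht
  set A := Multiset.sort (u i) (· ≤ ·) with hA
  set B := Multiset.sort (u j) (· ≤ ·) with hB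
  set W := Multiset.sort (u i + u j) (· ≤ ·) with hW
  have hlenA : A.length = di := Multiset.length_sort _
  have hlenB : B.length = dj := Multiset.length_sort _
  have hlenW : W.length = t := by
    rw [hW, Multiset.length_sort, Multiset.card_add]
  have hWsorted : W.Pairwise (· ≤ ·) := Multiset.pairwise_sort _ _
  have hS := altSplit_sorted W hWsorted
  have hSlen := altSplit_lengths W
  have hlenS1 : (altSplit W).1.length = di := by rw [hSlen.1, hlenW]; omega
  have hlenS2 : (altSplit W).2.length = dj := by rw [hSlen.2, hlenW]; omega
  have hu'i : u' i = ((altSplit W).1 : Multiset ℕ) := by rw [hui]; rfl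
  have hu'j : u' j = ((altSplit W).2 : Multiset ℕ) := by rw [huj]; rfl
  have hsortu'i : Multiset.sort (u' i) (· ≤ ·) = (altSplit W).1 := by
    rw [hu'i]; exact sort_coe _ hS.1
  have hsortu'j : Multiset.sort (u' j) (· ≤ ·) = (altSplit W).2 := by
    rw [hu'j]; exact sort_coe _ hS.2
  -- entry along a decomposition p = k + a*q
  have entry_eq : ∀ (v : Fin q → Multiset ℕ) (k : Fin q) (a : ℕ),
      entry v ((k:ℕ) + a * q) = (Multiset.sort (v k) (· ≤ ·)).getD a 0 := by
    intro v k a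
    have hmod : ((k:ℕ) + a * q) % q = (k:ℕ) := by
      rw [Nat.add_mul_mod_self_right, Nat.mod_eq_of_lt k.isLt]
    have hdiv : ((k:ℕ) + a * q) / q = a := by
      rw [Nat.add_mul_div_right _ _ hq, Nat.div_eq_of_lt k.isLt, zero_add]
    have hfin : (⟨((k:ℕ) + a * q) % q, Nat.mod_lt _ hq⟩ : Fin q) = k :=
      Fin.val_injective (by simpa using hmod)
    simp only [entry, dif_pos hq, hfin, hdiv]
  set π : ℕ → ℕ := fun m => (if m % 2 = 0 then (i:ℕ) else (j:ℕ)) + (m / 2) * q with hπ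
  have hπeven : ∀ a : ℕ, π (2 * a) = (i:ℕ) + a * q := by
    intro a
    have e1 : (2*a) % 2 = 0 := by omega
    have e2 : (2*a) / 2 = a := by omega
    simp [hπ, e1, e2]
  have hπodd : ∀ a : ℕ, π (2 * a + 1) = (j:ℕ) + a * q := by
    intro a
    have e1 : (2*a+1) % 2 = 1 := by omega
    have e2 : (2*a+1) / 2 = a := by omega
    simp [hπ, e1, e2]
  have hπmono : StrictMono π := by
    apply strictMono_nat_of_lt_succ
    intro m
    rcases Nat.even_or_odd m with ⟨a, hk⟩ | ⟨a, hk⟩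
    · have hm : m = 2*a := by omega
      subst hm
      rw [hπeven, hπodd]
      exact Nat.add_lt_add_right hvij _
    · have hm : m = 2*a+1 := by omega
      subst hm
      rw [hπodd, show 2*a+1+1 = 2*(a+1) by ring, hπeven]
      have h1 : (j:ℕ) + a*q < q + a*q := Nat.add_lt_add_right j.isLt _
      have h2 : (a+1)*q = a*q + q := by ring
      linarith [Nat.zero_le (i:ℕ)]
  have hπrange : ∀ m, m < t → π m < N := by
    intro m hm
    rcases Nat.even_or_odd m with ⟨a, hk⟩ | ⟨a, hk⟩
    · have hm2 : m = 2*a := by omega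
      subst hm2
      rw [hπeven]
      have ha : a < di := by omega
      rcases lt_or_ge (i:ℕ) r with h | h
      · rw [if_pos h] at hdi
        have h2 : a * q ≤ d * q := Nat.mul_le_mul_right q (by omega)
        have h3 : q * d = d * q := Nat.mul_comm q d
        rw [hN]; linarith
      · rw [if_neg (not_lt.mpr h)] at hdi
        have h2 : (a+1) * q ≤ d * q := Nat.mul_le_mul_right q (by omega)
        have h3 : (a+1)*q = a*q + q := by ring
        have h4 : q * d = d * q := Nat.mul_comm q d
        have h5 : (i:ℕ) < q := i.isLt
        rw [hN]; linarith
    · have hm2 : m = 2*a+1 := by omega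
      subst hm2
      rw [hπodd]
      have ha : a < dj := by omega
      rcases lt_or_ge (j:ℕ) r with h | h
      · rw [if_pos h] at hdj
        have h2 : a * q ≤ d * q := Nat.mul_le_mul_right q (by omega)
        have h3 : q * d = d * q := Nat.mul_comm q d
        rw [hN]; linarith
      · rw [if_neg (not_lt.mpr h)] at hdj
        have h2 : (a+1) * q ≤ d * q := Nat.mul_le_mul_right q (by omega)
        have h3 : (a+1)*q = a*q + q := by ring
        have h4 : q * d = d * q := Nat.mul_comm q d
        have h5 : (j:ℕ) < q := j.isLt
        rw [hN]; linarith
  have hdecomp : ∀ p, p < N → ∀ k : Fin q, p % q = (k:ℕ) → p / q < Multiset.card (u k) := by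
    intro p hp k hk
    have hmd : p % q + q * (p / q) = p := Nat.mod_add_div p q
    rw [hdeg k]
    rcases lt_or_ge (k:ℕ) r with h | h
    · rw [if_pos h]
      by_contra hge
      push_neg at hge
      have h1 : q * (d+1) ≤ q * (p/q) := Nat.mul_le_mul_left q hge
      have h2 : q * (d+1) = q * d + q := by ring
      rw [hN] at hp
      linarith
    · rw [if_neg (not_lt.mpr h)]
      by_contra hge
      push_neg at hge
      have h1 : q * d ≤ q * (p/q) := Nat.mul_le_mul_left q hge
      rw [hN] at hp
      linarith
  -- the difference of gvals
  have e1 : gval q d r u = ∑ p ∈ Finset.range N, ((2*p+1 : ℤ) - N) * (entry u p : ℤ) :=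
    sum_pairs N (fun p => (entry u p : ℤ))
  have e2 : gval q d r u' = ∑ p ∈ Finset.range N, ((2*p+1 : ℤ) - N) * (entry u' p : ℤ) :=
    sum_pairs N (fun p => (entry u' p : ℤ))
  set F : ℕ → ℤ := fun p => ((2*p+1 : ℤ) - N) * ((entry u' p : ℤ) - (entry u p : ℤ)) with hF
  have hgdiff : gval q d r u' - gval q d r u = ∑ p ∈ Finset.range N, F p := by
    rw [e1, e2, ← Finset.sum_sub_distrib]
    exact Finset.sum_congr rfl (fun p _ => by rw [hF]; ring)
  have himsub : Finset.image π (Finset.range t) ⊆ Finset.range N := by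
    intro p hp
    simp only [Finset.mem_image, Finset.mem_range] at hp ⊢
    obtain ⟨m, hm, rfl⟩ := hp
    exact hπrange m hm
  have hFsupp : ∀ p ∈ Finset.range N, p ∉ Finset.image π (Finset.range t) → F p = 0 := by
    intro p hpN hpim
    rw [Finset.mem_range] at hpN
    set k : Fin q := ⟨p % q, Nat.mod_lt p hq⟩ with hk
    have hpk : p % q = (k:ℕ) := rfl
    have hmd : p % q + q * (p / q) = p := Nat.mod_add_div p q
    by_cases hki : k = i
    · exfalso
      apply hpim
      simp only [Finset.mem_image, Finset.mem_range]
      refine ⟨2 * (p / q), ?_, ?_⟩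
      · have h1 := hdecomp p hpN k hpk
        rw [hki] at h1
        omega
      · rw [hπeven]
        have hpk' : p % q = (i:ℕ) := by rw [hpk, hki]
        have h6 : q * (p/q) = (p/q) * q := Nat.mul_comm _ _
        linarith
    · by_cases hkj : k = j
      · exfalso
        apply hpim
        simp only [Finset.mem_image, Finset.mem_range]
        refine ⟨2 * (p / q) + 1, ?_, ?_⟩
        · have h1 := hdecomp p hpN k hpk
          rw [hkj] at h1
          omega
        · rw [hπodd]
          have hpk' : p % q = (j:ℕ) := by rw [hpk, hkj]
          have h6 : q * (p/q) = (p/q) * q := Nat.mul_comm _ _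
          linarith
      · have hee : entry u' p = entry u p := by
          simp only [entry, dif_pos hq, ← hk]
          rw [hother k hki hkj]
        rw [hF]
        simp only [hee, sub_self, mul_zero]
  have hrestrict : ∑ p ∈ Finset.range N, F p = ∑ m ∈ Finset.range t, F (π m) := by
    rw [← Finset.sum_subset himsub hFsupp]
    exact Finset.sum_image (fun x _ y _ hxy => hπmono.injective hxy)
  -- entries along π
  have hEu : ∀ m : ℕ, entry u (π m) = (itl A B).getD m 0 := by
    intro m
    rw [itl_getD A B (by rw [hlenA, hlenB]; exact hdji1) (by rw [hlenA, hlenB]; exact hdji2) m]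
    rcases Nat.even_or_odd m with ⟨a, hk⟩ | ⟨a, hk⟩
    · have hm2 : m = 2*a := by omega
      subst hm2
      have e3 : (2*a) % 2 = 0 := by omega
      have e4 : (2*a) / 2 = a := by omega
      rw [if_pos e3, e4, hπeven, entry_eq u i a, ← hA]
    · have hm2 : m = 2*a+1 := by omega
      subst hm2
      have e3 : (2*a+1) % 2 = 1 := by omega
      have e4 : (2*a+1) / 2 = a := by omega
      rw [if_neg (by omega), e4, hπodd, entry_eq u j a, ← hB]
  have hEu' : ∀ m : ℕ, entry u' (π m) = W.getD m 0 := by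
    intro m
    conv_rhs => rw [← altSplit_itl W]
    rw [itl_getD _ _ (by rw [hlenS1, hlenS2]; exact hdji1)
      (by rw [hlenS1, hlenS2]; exact hdji2) m]
    rcases Nat.even_or_odd m with ⟨a, hk⟩ | ⟨a, hk⟩
    · have hm2 : m = 2*a := by omega
      subst hm2
      have e3 : (2*a) % 2 = 0 := by omega
      have e4 : (2*a) / 2 = a := by omega
      rw [if_pos e3, e4, hπeven, entry_eq u' i a, hsortu'i]
    · have hm2 : m = 2*a+1 := by omega
      subst hm2
      have e3 : (2*a+1) % 2 = 1 := by omega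
      have e4 : (2*a+1) / 2 = a := by omega
      rw [if_neg (by omega), e4, hπodd, entry_eq u' j a, hsortu'j]
  -- core inequality setup
  set cF : Fin t → ℤ := fun m => (2 * (π (m:ℕ) : ℤ) + 1 - N) with hcF
  set vF : Fin t → ℤ := fun m => (((itl A B).getD (m:ℕ) 0 : ℕ) : ℤ) with hvF
  set wF : Fin t → ℤ := fun m => ((W.getD (m:ℕ) 0 : ℕ) : ℤ) with hwF
  have hlen_itl : (itl A B).length = t := by rw [itl_length, hlenA, hlenB]
  have hofv : List.ofFn vF = (itl A B).map (fun x : ℕ => (x:ℤ)) := ofFn_getD _ _ hlen_itl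
  have hofw : List.ofFn wF = W.map (fun x : ℕ => (x:ℤ)) := ofFn_getD _ _ hlenW
  have hperm : List.Perm (List.ofFn vF) (List.ofFn wF) := by
    rw [hofv, hofw]
    apply List.Perm.map
    apply Multiset.coe_eq_coe.mp
    calc ((itl A B : List ℕ) : Multiset ℕ) = ((A ++ B : List ℕ) : Multiset ℕ) :=
          Multiset.coe_eq_coe.mpr (itl_perm A B)
      _ = (A : Multiset ℕ) + (B : Multiset ℕ) := by rw [← Multiset.coe_add]
      _ = u i + u j := by rw [hA, hB, Multiset.sort_eq, Multiset.sort_eq]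
      _ = (W : Multiset ℕ) := (Multiset.sort_eq _ _).symm
  have hcmono : StrictMono cF := by
    intro a b hab
    have h1 := hπmono (show (a:ℕ) < (b:ℕ) from hab)
    have h2 : (π (a:ℕ) : ℤ) < (π (b:ℕ) : ℤ) := by exact_mod_cast h1
    simp only [hcF]
    linarith
  have hwmono : Monotone wF := by
    intro a b hab
    rcases eq_or_lt_of_le hab with h | h
    · rw [h]
    · have ha : (a:ℕ) < W.length := by rw [hlenW]; exact a.isLt
      have hb : (b:ℕ) < W.length := by rw [hlenW]; exact b.isLt
      simp only [hwF]
      rw [List.getD_eq_getElem _ _ ha, List.getD_eq_getElem _ _ hb]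
      exact_mod_cast List.pairwise_iff_getElem.mp hWsorted _ _ ha hb h
  have hne : vF ≠ wF := by
    intro heq
    apply huns
    have hlists : itl A B = W := by
      apply List.ext_getElem (by rw [hlen_itl, hlenW])
      intro n h1 h2
      have hn : n < t := by rwa [hlen_itl] at h1
      have h3 := congrFun heq ⟨n, hn⟩
      simp only [hvF, hwF] at h3
      rw [List.getD_eq_getElem _ _ h1, List.getD_eq_getElem _ _ h2] at h3
      exact_mod_cast h3
    have hsplit : altSplit W = (A, B) := by
      rw [← hlists]
      exact itl_altSplit A B (by rw [hlenA, hlenB]; exact hdji1)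
        (by rw [hlenA, hlenB]; exact hdji2)
    show sortPair (u i) (u j) = (u i, u j)
    have h4 : sortPair (u i) (u j)
        = (((altSplit W).1 : Multiset ℕ), ((altSplit W).2 : Multiset ℕ)) := rfl
    rw [h4, hsplit]
    rw [hA, hB, Multiset.sort_eq, Multiset.sort_eq]
  have hcore := core cF vF wF hcmono hwmono hperm hne
  have hfinal : ∑ m ∈ Finset.range t, F (π m)
      = (∑ m : Fin t, cF m * wF m) - (∑ m : Fin t, cF m * vF m) := by
    simp only [hcF, hvF, hwF]
    rw [Fin.sum_univ_eq_sum_range (fun m => (2 * (π m : ℤ) + 1 - N) * ((W.getD m 0 : ℕ) : ℤ)) t,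
      Fin.sum_univ_eq_sum_range
        (fun m => (2 * (π m : ℤ) + 1 - N) * (((itl A B).getD m 0 : ℕ) : ℤ)) t,
      ← Finset.sum_sub_distrib]
    apply Finset.sum_congr rfl
    intro m _
    simp only [hF]
    rw [hEu m, hEu' m]
    ring
  have : 0 < gval q d r u' - gval q d r u := by
    rw [hgdiff, hrestrict, hfinal]
    linarith
  linarith
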